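/- Let m be a mass function on a finite set E = {x_1,…,x_n}. Define p̲_i = Bel_m({x_i}) and p̄_i = Pl_m({x_i}) for i = 1,…,n. Then p̲_i ≤ p̄_i for all i, and the family (p̲_i, p̄_i)_{i=1}^n is a coherent probability interval on E. -/
import Mathlib


open Finset

/-- A Dempster–Shafer mass function on the finite type `α`:
nonnegative, at most one, vanishing on `∅`, and summing to one. -/
def IsMass {α : Type*} [Fintype α] [DecidableEq α] (m : Finset α → ℝ) : Prop :=
  m ∅ = 0 ∧ (∀ V : Finset α, 0 ≤ m V ∧ m V ≤ 1) ∧ (∑ V : Finset α, m V) = 1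

/-- The belief function associated to a mass function: `Bel m W = ∑_{V ⊆ W} m V`. -/
def Bel {α : Type*} [Fintype α] [DecidableEq α] (m : Finset α → ℝ) (W : Finset α) : ℝ :=
  ∑ V ∈ Finset.univ.filter (fun V : Finset α => V ⊆ W), m V

/-- The plausibility function associated to a mass function:
`Pl m W = ∑_{V ∩ W ≠ ∅} m V`. -/
def Pl {α : Type*} [Fintype α] [DecidableEq α] (m : Finset α → ℝ) (W : Finset α) : ℝ :=
  ∑ V ∈ Finset.univ.filter (fun V : Finset α => (V ∩ W).Nonempty), m V

/-- A coherent probability interval `(lo i, hi i)_{i}` on `Fin n`: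
componentwise bounds `0 ≤ lo ≤ hi ≤ 1`, together with [Coh1], [Coh2], [Coh3]. -/
def IsCoherent {n : ℕ} (lo hi : Fin n → ℝ) : Prop :=
  (∀ i, 0 ≤ lo i ∧ lo i ≤ hi i ∧ hi i ≤ 1) ∧
  (∑ i, lo i) ≤ 1 ∧ 1 ≤ (∑ i, hi i) ∧
  (∀ i, 1 - ∑ h ∈ Finset.univ.erase i, hi h ≤ lo i) ∧
  (∀ i, hi i ≤ 1 - ∑ h ∈ Finset.univ.erase i, lo h)

/-- `Δ = S̄ + (n-2)S̲ - (n-1)` for a probability interval. -/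
def intervalDelta {n : ℕ} (lo hi : Fin n → ℝ) : ℝ :=
  (∑ i, hi i) + ((n : ℝ) - 2) * (∑ i, lo i) - ((n : ℝ) - 1)

/-- A *good* coherent probability interval: coherent and `Δ ≥ 0`. -/
def IsGood {n : ℕ} (lo hi : Fin n → ℝ) : Prop :=
  IsCoherent lo hi ∧ 0 ≤ intervalDelta lo hi

/-- The standard good mass (SGM) associated to a (good coherent) probability interval:
mass `lo i` on each singleton `{a_i}`, mass `1 - hi i - ∑_{h ≠ i} lo h` on each
complement `univ ∖ {a_i}`, mass `Δ` on `univ`, and `0` on every other set. -/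
def SGM {n : ℕ} (lo hi : Fin n → ℝ) (V : Finset (Fin n)) : ℝ :=
  (∑ i ∈ Finset.univ.filter (fun i : Fin n => V = {i}), lo i)
  + (∑ i ∈ Finset.univ.filter (fun i : Fin n => V = Finset.univ \ {i}),
      (1 - hi i - ∑ h ∈ Finset.univ.erase i, lo h))
  + (if V = Finset.univ then intervalDelta lo hi else 0)


lemma bel_sing {n : ℕ} (m : Finset (Fin n) → ℝ) (h0 : m ∅ = 0) (i : Fin n) :
    Bel m {i} = m {i} := by
  have hfil : Finset.univ.filter (fun V : Finset (Fin n) => V ⊆ {i}) = {∅, {i}} := by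
    ext V; simp [Finset.subset_singleton_iff]
  rw [Bel, hfil, Finset.sum_pair (Finset.singleton_ne_empty i).symm, h0, zero_add]

lemma pl_sing {n : ℕ} (m : Finset (Fin n) → ℝ) (i : Fin n) :
    Pl m {i} = ∑ V ∈ Finset.univ.filter (fun V : Finset (Fin n) => i ∈ V), m V := by
  rw [Pl]; congr 1; apply Finset.filter_congr; intro V _
  constructor
  · rintro ⟨x, hx⟩; simp only [Finset.mem_inter, Finset.mem_singleton] at hx
    exact hx.2 ▸ hx.1
  · intro h; exact ⟨i, by simp [h]⟩

lemma sum_pl {n : ℕ} (m : Finset (Fin n) → ℝ) (s : Finset (Fin n)) :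
    ∑ h ∈ s, (∑ V ∈ Finset.univ.filter (fun V : Finset (Fin n) => h ∈ V), m V)
      = ∑ V : Finset (Fin n), ((V ∩ s).card : ℝ) * m V := by
  have key : ∀ h ∈ s, (∑ V ∈ Finset.univ.filter (fun V : Finset (Fin n) => h ∈ V), m V)
      = ∑ V : Finset (Fin n), (if h ∈ V then m V else 0) := by
    intro h _; rw [Finset.sum_filter]
  rw [Finset.sum_congr rfl key, Finset.sum_comm]
  apply Finset.sum_congr rfl
  intro V _
  rw [← Finset.sum_filter, Finset.filter_mem_eq_inter, Finset.sum_const,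
    nsmul_eq_mul, Finset.inter_comm]

/-- For any mass function `m` on `E = Fin n`, setting
`p̲ᵢ = Bel_m({xᵢ})` and `p̄ᵢ = Pl_m({xᵢ})`, one has `p̲ᵢ ≤ p̄ᵢ` for all `i`, and
`(p̲ᵢ, p̄ᵢ)ᵢ` is a coherent probability interval on `E`. -/
theorem mass_gives_coherent_interval (n : ℕ) (m : Finset (Fin n) → ℝ)
    (hm : IsMass m) :
    (∀ i : Fin n, Bel m {i} ≤ Pl m {i}) ∧
    IsCoherent (fun i : Fin n => Bel m {i}) (fun i : Fin n => Pl m {i}) := by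

  obtain ⟨h0, hb, hsum⟩ := hm
  have hnon : ∀ V, 0 ≤ m V := fun V => (hb V).1
  have hbelle : ∀ i : Fin n, Bel m {i} ≤ Pl m {i} := by
    intro i
    rw [bel_sing m h0 i, pl_sing m i]
    apply Finset.single_le_sum (fun V _ => hnon V)
    simp
  refine ⟨hbelle, ?_, ?_, ?_, ?_, ?_⟩
  · -- componentwise bounds
    intro i
    refine ⟨?_, hbelle i, ?_⟩
    · show 0 ≤ Bel m {i}
      rw [bel_sing m h0 i]; exact hnon _
    · show Pl m {i} ≤ 1
      rw [pl_sing m i, ← hsum]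
      exact Finset.sum_le_sum_of_subset_of_nonneg (Finset.filter_subset _ _)
        (fun V _ _ => hnon V)
  · -- sum of lower bounds ≤ 1
    have : ∑ i : Fin n, Bel m {i} = ∑ V ∈ Finset.univ.image (fun i : Fin n => ({i} : Finset (Fin n))), m V := by
      rw [Finset.sum_image (fun a _ b _ h => Finset.singleton_injective h)]
      exact Finset.sum_congr rfl (fun i _ => bel_sing m h0 i)
    rw [this, ← hsum]
    exact Finset.sum_le_sum_of_subset_of_nonneg (Finset.subset_univ _)
      (fun V _ _ => hnon V)
  · -- 1 ≤ sum of upper bounds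
    have h1 : ∑ i : Fin n, Pl m {i} = ∑ V : Finset (Fin n), ((V ∩ Finset.univ).card : ℝ) * m V := by
      rw [← sum_pl m Finset.univ]
      exact Finset.sum_congr rfl (fun i _ => pl_sing m i)
    rw [h1, ← hsum]
    apply Finset.sum_le_sum
    intro V _
    rcases eq_or_ne V ∅ with hV | hV
    · simp [hV, h0]
    · apply le_mul_of_one_le_left (hnon V)
      have : 1 ≤ (V ∩ Finset.univ).card := by
        rw [Finset.inter_univ]
        exact Finset.card_pos.mpr (Finset.nonempty_iff_ne_empty.mpr hV)
      exact_mod_cast this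
  · -- Coh2
    intro i
    rw [sub_le_iff_le_add]
    simp only
    have h1 : ∑ h ∈ Finset.univ.erase i, Pl m {h}
        = ∑ V : Finset (Fin n), ((V ∩ Finset.univ.erase i).card : ℝ) * m V := by
      rw [← sum_pl m (Finset.univ.erase i)]
      exact Finset.sum_congr rfl (fun h _ => pl_sing m h)
    have hmi : m ({i} : Finset (Fin n))
        = ∑ V : Finset (Fin n), (if V = ({i} : Finset (Fin n)) then m V else 0) := by
      simp
    rw [h1, bel_sing m h0 i, hmi, ← hsum, ← Finset.sum_add_distrib]
    apply Finset.sum_le_sum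
    intro V _
    have hcard : V ∩ Finset.univ.erase i = V.erase i := by
      ext x; simp [Finset.mem_erase, and_comm]
    rw [hcard]
    rcases eq_or_ne V ∅ with hV | hV
    · simp [hV, h0]
    rcases eq_or_ne V ({i} : Finset (Fin n)) with hVi | hVi
    · rw [if_pos hVi]
      have : 0 ≤ ((V.erase i).card : ℝ) * m V :=
        mul_nonneg (Nat.cast_nonneg _) (hnon V)
      linarith
    · rw [if_neg hVi, zero_add]
      have hns : ¬ V ⊆ {i} := by
        rw [Finset.subset_singleton_iff]; tauto
      obtain ⟨y, hyV, hyi⟩ := Finset.not_subset.mp hns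
      have hy : y ∈ V.erase i := Finset.mem_erase.mpr ⟨by simpa using hyi, hyV⟩
      have h1c : 1 ≤ ((V.erase i).card : ℝ) := by
        exact_mod_cast Finset.card_pos.mpr ⟨y, hy⟩
      exact le_mul_of_one_le_left (hnon V) h1c
  · -- Coh3
    intro i
    rw [le_sub_iff_add_le]
    simp only
    have hbel : ∑ h ∈ Finset.univ.erase i, Bel m {h}
        = ∑ V ∈ (Finset.univ.erase i).image (fun h : Fin n => ({h} : Finset (Fin n))), m V := by
      rw [Finset.sum_image (fun a _ b _ h => Finset.singleton_injective h)]
      exact Finset.sum_congr rfl (fun h _ => bel_sing m h0 h)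
    rw [hbel, pl_sing m i, ← Finset.sum_union]
    · rw [← hsum]
      exact Finset.sum_le_sum_of_subset_of_nonneg (Finset.subset_univ _)
        (fun V _ _ => hnon V)
    · rw [Finset.disjoint_left]
      intro V hV1 hV2
      simp only [Finset.mem_filter] at hV1
      obtain ⟨h, hh, rfl⟩ := Finset.mem_image.mp hV2
      have : h ≠ i := (Finset.mem_erase.mp hh).1
      exact this (Finset.mem_singleton.mp hV1.2).symm
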